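/- Let U be uniform on the unit sphere S^{d-1} in ℝ^d and 0 ≤ a ≤ 1. Then P(⟨U, u⟩ > a) ≥ ((1-a)/(2d)) (1 - a²)^{(d-1)/2} for any fixed u ∈ S^{d-1}. -/

import Mathlib

open MeasureTheory Real
open scoped ENNReal

open Set Metric
open scoped Pointwise

/-- The uniform probability measure on the unit sphere `S^{d-1} ⊂ ℝ^d`. -/
noncomputable def uniformSphere (d : ℕ) :
    Measure (Metric.sphere (0 : EuclideanSpace ℝ (Fin d)) 1) :=
  ((volume : Measure (EuclideanSpace ℝ (Fin d))).toSphere Set.univ)⁻¹ •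
    (volume : Measure (EuclideanSpace ℝ (Fin d))).toSphere


lemma euclid_ball_vol (m : ℕ) {r : ℝ} (hr : 0 < r) :
    volume (ball (0 : EuclideanSpace ℝ (Fin m)) r)
      = ENNReal.ofReal (r ^ m) * volume (ball (0 : EuclideanSpace ℝ (Fin m)) 1) := by
  cases m with
  | zero =>
      have h1 : ball (0 : EuclideanSpace ℝ (Fin 0)) r = univ :=
        eq_univ_of_forall fun x => by
          simpa [Subsingleton.elim x 0] using hr
      have h2 : ball (0 : EuclideanSpace ℝ (Fin 0)) 1 = univ :=
        eq_univ_of_forall fun x => by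
          simpa [Subsingleton.elim x 0] using one_pos
      simp [h1, h2]
  | succ n =>
      rw [Measure.addHaar_ball volume _ hr.le, finrank_euclideanSpace_fin]

lemma cap_volume (m : ℕ) (a : ℝ) (ha : -1 ≤ a) :
    volume {x : EuclideanSpace ℝ (Fin (m+1)) | ‖x‖ < 1 ∧ a < x 0}
      = (∫⁻ t in Set.Ioo a 1, ENNReal.ofReal (Real.sqrt (1 - t^2) ^ m))
          * volume (ball (0 : EuclideanSpace ℝ (Fin m)) 1) := by
  set Vm := volume (ball (0 : EuclideanSpace ℝ (Fin m)) 1)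
  -- the set in (ℝ × (Fin m → ℝ))
  set T : Set (ℝ × (Fin m → ℝ)) :=
    {p | p.1^2 + ∑ i, (p.2 i)^2 < 1 ∧ a < p.1} with hT
  have hTopen : IsOpen T := by
    apply IsOpen.inter
    · exact isOpen_lt (show Continuous fun p : ℝ × (Fin m → ℝ) => p.1^2 + ∑ i, (p.2 i)^2
        by fun_prop) continuous_const
    · exact isOpen_lt continuous_const continuous_fst
  have hTmeas : MeasurableSet T := hTopen.measurableSet
  -- step 1 : Euclidean set to pi set
  have h1 : volume {x : EuclideanSpace ℝ (Fin (m+1)) | ‖x‖ < 1 ∧ a < x 0}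
      = volume ((MeasurableEquiv.piFinSuccAbove (fun _ : Fin (m+1) => ℝ) 0) ⁻¹'
          T : Set (Fin (m+1) → ℝ)) := by
    rw [← (EuclideanSpace.volume_preserving_symm_measurableEquiv_toLp (Fin (m+1))).measure_preimage]
    · congr 1
      ext x
      have hx : ‖x‖ < 1 ↔ ∑ i, x i ^ 2 < 1 := by
        rw [EuclideanSpace.norm_eq]
        rw [show (1:ℝ) = Real.sqrt 1 by simp]
        constructor
        · intro h
          have := (Real.sqrt_lt_sqrt_iff (by positivity)).mp h
          simpa using this
        · intro h
          exact (Real.sqrt_lt_sqrt_iff (by positivity)).mpr (by simpa using h)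
      simp only [Set.mem_preimage, Set.mem_setOf_eq, MeasurableEquiv.piFinSuccAbove,
        MeasurableEquiv.coe_mk, Fin.insertNthEquiv, Equiv.coe_fn_symm_mk]
      rw [hx, Fin.sum_univ_succ]
      rfl
    · exact ((MeasurableEquiv.piFinSuccAbove (fun _ : Fin (m+1) => ℝ) 0).measurable
        hTmeas).nullMeasurableSet
  rw [h1, ((volume_preserving_piFinSuccAbove (fun _ : Fin (m+1) => ℝ) 0).measure_preimage
    hTmeas.nullMeasurableSet)]
  -- step 2 : product measure, Fubini
  rw [Measure.volume_eq_prod, Measure.prod_apply hTmeas]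
  have hslice : ∀ t : ℝ, volume (Prod.mk t ⁻¹' T)
      = (Set.Ioo a 1).indicator
          (fun t => ENNReal.ofReal (Real.sqrt (1 - t^2) ^ m) * Vm) t := by
    intro t
    rcases em (t ∈ Set.Ioo a 1) with ht | ht
    · rw [Set.indicator_of_mem ht]
      have hr : 0 < Real.sqrt (1 - t^2) := by
        apply Real.sqrt_pos.mpr
        nlinarith [ht.1, ht.2, ha]
      have hset : (Prod.mk t ⁻¹' T) = {y : Fin m → ℝ | ∑ i, y i ^ 2 < 1 - t^2} := by
        ext y
        simp only [Set.mem_preimage, hT, Set.mem_setOf_eq]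
        constructor
        · intro h; linarith [h.1]
        · intro h; exact ⟨by linarith, ht.1⟩
      rw [hset]
      have h2 : volume {y : Fin m → ℝ | ∑ i, y i ^ 2 < 1 - t^2}
          = volume (ball (0 : EuclideanSpace ℝ (Fin m)) (Real.sqrt (1 - t^2))) := by
        rw [← (EuclideanSpace.volume_preserving_symm_measurableEquiv_toLp (Fin m)).measure_preimage]
        · congr 1
          ext y
          simp only [Set.mem_preimage, Set.mem_setOf_eq, mem_ball, dist_zero_right]
          rw [EuclideanSpace.norm_eq]
          constructor
          · intro h
            apply Real.sqrt_lt_sqrt (by positivity)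
            simpa using h
          · intro h
            have := (Real.sqrt_lt_sqrt_iff (by positivity)).mp h
            simpa using this
        · exact (isOpen_lt (show Continuous fun y : Fin m → ℝ => ∑ i, (y i)^2 by fun_prop)
            continuous_const).measurableSet.nullMeasurableSet
      rw [h2, euclid_ball_vol m hr]
    · rw [Set.indicator_of_notMem ht]
      have hset : (Prod.mk t ⁻¹' T) = ∅ := by
        ext y
        simp only [Set.mem_preimage, hT, Set.mem_setOf_eq, Set.mem_empty_iff_false, iff_false]
        rintro ⟨h1', h2'⟩
        apply ht
        refine ⟨h2', ?_⟩
        by_contra hle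
        push_neg at hle
        have ht2 : (1:ℝ) ≤ t^2 := one_le_pow₀ hle
        have : (0:ℝ) ≤ ∑ i, y i ^ 2 := by positivity
        linarith
      simp [hset]
  simp only [hslice]
  rw [lintegral_indicator measurableSet_Ioo]
  rw [lintegral_mul_const]
  fun_prop


lemma sqrt_pow_eq_rpow {s : ℝ} (hs : 0 ≤ s) (m : ℕ) :
    Real.sqrt s ^ m = s ^ ((m:ℝ)/2) := by
  rw [← Real.rpow_natCast (Real.sqrt s) m, Real.sqrt_eq_rpow, ← Real.rpow_mul hs]
  ring_nf

lemma integral_lb (m : ℕ) (a : ℝ) (ha0 : 0 ≤ a) (ha1 : a ≤ 1) :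
    (1-a)/(m+1) * (1-a^2) ^ ((m:ℝ)/2) ≤ ∫ t in a..1, Real.sqrt (1-t^2) ^ m := by
  set p : ℝ := (m:ℝ)/2 with hp
  have hp0 : 0 ≤ p := by positivity
  have hcont1 : Continuous fun t : ℝ => Real.sqrt ((1+a)*(1-t)) ^ m := by
    apply Continuous.pow
    exact Real.continuous_sqrt.comp (by continuity)
  have hcont2 : Continuous fun t : ℝ => Real.sqrt (1-t^2) ^ m := by
    apply Continuous.pow
    exact Real.continuous_sqrt.comp (by continuity)
  have h1 : ∫ t in a..1, Real.sqrt ((1+a)*(1-t)) ^ m ≤ ∫ t in a..1, Real.sqrt (1-t^2) ^ m := by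
    apply intervalIntegral.integral_mono_on ha1
      (hcont1.intervalIntegrable _ _) (hcont2.intervalIntegrable _ _)
    intro t ht
    apply pow_le_pow_left₀ (Real.sqrt_nonneg _)
    apply Real.sqrt_le_sqrt
    nlinarith [ht.1, ht.2]
  have h2 : ∫ t in a..1, Real.sqrt ((1+a)*(1-t)) ^ m
      = Real.sqrt (1+a) ^ m * ∫ t in a..1, Real.sqrt (1-t) ^ m := by
    rw [← intervalIntegral.integral_const_mul]
    congr 1
    ext t
    rw [Real.sqrt_mul (by linarith), mul_pow]
  have h3 : ∫ t in a..1, Real.sqrt (1-t) ^ m = ∫ s in (0:ℝ)..(1-a), Real.sqrt s ^ m := by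
    have := intervalIntegral.integral_comp_sub_left (a := a) (b := 1)
      (fun s => Real.sqrt s ^ m) 1
    simpa using this
  have h4 : ∫ s in (0:ℝ)..(1-a), Real.sqrt s ^ m = (1-a) ^ (p+1) / (p+1) := by
    rw [intervalIntegral.integral_congr (g := fun s => s ^ p)
      (fun s hs => by
        rw [Set.uIcc_of_le (by linarith)] at hs
        exact sqrt_pow_eq_rpow hs.1 m)]
    rw [integral_rpow (Or.inl (by linarith : (-1:ℝ) < p))]
    rw [Real.zero_rpow (by positivity : (0:ℝ) < p+1).ne']
    ring
  have h5 : Real.sqrt (1+a) ^ m = (1+a) ^ p := sqrt_pow_eq_rpow (by linarith) m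
  have key : (1+a) ^ p * ((1-a) ^ (p+1) / (p+1)) ≤ ∫ t in a..1, Real.sqrt (1-t^2) ^ m := by
    calc (1+a) ^ p * ((1-a) ^ (p+1) / (p+1))
        = Real.sqrt (1+a) ^ m * ∫ s in (0:ℝ)..(1-a), Real.sqrt s ^ m := by rw [h5, h4]
      _ = ∫ t in a..1, Real.sqrt ((1+a)*(1-t)) ^ m := by rw [h2, h3]
      _ ≤ _ := h1
  refine le_trans ?_ key
  have e1 : (1-a^2 : ℝ) ^ p = (1-a) ^ p * (1+a) ^ p := by
    rw [show (1-a^2 : ℝ) = (1-a)*(1+a) by ring, Real.mul_rpow (by linarith) (by linarith)]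
  have e2 : (1-a : ℝ) ^ (p+1) = (1-a) ^ p * (1-a) := by
    rw [Real.rpow_add' (by linarith) (by positivity), Real.rpow_one]
  rw [e1, e2]
  have hX : (0:ℝ) ≤ (1-a) ^ p * (1+a) ^ p * (1-a) := by
    have h1' : (0:ℝ) ≤ (1-a) ^ p := Real.rpow_nonneg (by linarith) _
    have h2' : (0:ℝ) ≤ (1+a) ^ p := Real.rpow_nonneg (by linarith) _
    have : (0:ℝ) ≤ 1 - a := by linarith
    positivity
  have hple : p + 1 ≤ (m:ℝ) + 1 := by
    have hm : (0:ℝ) ≤ m := Nat.cast_nonneg m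
    rw [hp]
    linarith
  calc (1-a)/(m+1) * ((1-a) ^ p * (1+a) ^ p)
      = ((1-a) ^ p * (1+a) ^ p * (1-a)) * (1/((m:ℝ)+1)) := by ring
    _ ≤ ((1-a) ^ p * (1+a) ^ p * (1-a)) * (1/(p+1)) := by
        apply mul_le_mul_of_nonneg_left _ hX
        apply one_div_le_one_div_of_le (by positivity) hple
    _ = (1+a) ^ p * ((1-a) ^ p * (1-a) / (p+1)) := by ring

lemma cap_lower (m : ℕ) (a : ℝ) (ha0 : 0 ≤ a) (ha1 : a ≤ 1) :
    ENNReal.ofReal ((1 - a) / (2 * ((m:ℝ)+1)) * (1 - a ^ 2) ^ ((m:ℝ)/2))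
        * volume (ball (0 : EuclideanSpace ℝ (Fin (m+1))) 1)
      ≤ volume {x : EuclideanSpace ℝ (Fin (m+1)) | ‖x‖ < 1 ∧ a < x 0} := by
  have h1a2 : (0:ℝ) ≤ 1 - a^2 := by nlinarith
  set c : ℝ := (1 - a) / (2 * ((m:ℝ)+1)) * (1 - a ^ 2) ^ ((m:ℝ)/2) with hc
  have hc0 : 0 ≤ c := by
    apply mul_nonneg (div_nonneg (by linarith) (by positivity))
    exact Real.rpow_nonneg h1a2 _
  set Vm := volume (ball (0 : EuclideanSpace ℝ (Fin m)) 1) with hVm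
  -- volume of the unit ball in dimension m+1, by slicing
  have hball : ball (0 : EuclideanSpace ℝ (Fin (m+1))) 1
      = {x : EuclideanSpace ℝ (Fin (m+1)) | ‖x‖ < 1 ∧ (-1:ℝ) < x 0} := by
    ext x
    simp only [mem_ball, dist_zero_right, Set.mem_setOf_eq]
    constructor
    · intro h
      refine ⟨h, ?_⟩
      have hsq : (x 0)^2 ≤ ∑ i, x i ^ 2 := by
        apply Finset.single_le_sum (f := fun i => x i ^ 2) (fun i _ => by positivity)
          (Finset.mem_univ 0)
      have : |x 0| ≤ ‖x‖ := by
        rw [EuclideanSpace.norm_eq, ← Real.sqrt_sq_eq_abs]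
        simp only [Real.norm_eq_abs, sq_abs]
        exact Real.sqrt_le_sqrt hsq
      have := neg_abs_le (x 0)
      linarith
    · exact fun h => h.1
  have hVd : volume (ball (0 : EuclideanSpace ℝ (Fin (m+1))) 1)
      = (∫⁻ t in Set.Ioo (-1:ℝ) 1, ENNReal.ofReal (Real.sqrt (1 - t^2) ^ m)) * Vm := by
    rw [hball, cap_volume m (-1) le_rfl]
  rw [hVd, cap_volume m a (by linarith), ← mul_assoc]
  apply mul_le_mul_left
  -- key : ofReal c * I(-1) ≤ I(a)
  have hI1 : (∫⁻ t in Set.Ioo (-1:ℝ) 1, ENNReal.ofReal (Real.sqrt (1 - t^2) ^ m)) ≤ 2 := by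
    calc (∫⁻ t in Set.Ioo (-1:ℝ) 1, ENNReal.ofReal (Real.sqrt (1 - t^2) ^ m))
        ≤ ∫⁻ _ in Set.Ioo (-1:ℝ) 1, 1 := by
          apply lintegral_mono
          intro t
          apply ENNReal.ofReal_le_one.mpr
          apply pow_le_one₀ (Real.sqrt_nonneg _)
          rw [Real.sqrt_le_one]
          nlinarith [sq_nonneg t]
      _ = volume (Set.Ioo (-1:ℝ) 1) := setLIntegral_one _
      _ = 2 := by rw [Real.volume_Ioo]; norm_num
  have hcont2 : Continuous fun t : ℝ => Real.sqrt (1-t^2) ^ m := by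
    apply Continuous.pow
    exact Real.continuous_sqrt.comp (by continuity)
  calc ENNReal.ofReal c * (∫⁻ t in Set.Ioo (-1:ℝ) 1, ENNReal.ofReal (Real.sqrt (1 - t^2) ^ m))
      ≤ ENNReal.ofReal c * 2 := mul_le_mul_right hI1 _
    _ = ENNReal.ofReal (c * 2) := by
        rw [ENNReal.ofReal_mul hc0]; norm_num
    _ ≤ ENNReal.ofReal (∫ t in a..1, Real.sqrt (1-t^2) ^ m) := by
        apply ENNReal.ofReal_le_ofReal
        have hm1 : ((m:ℝ)+1) ≠ 0 := by positivity
        have heq : c * 2 = (1-a)/((m:ℝ)+1) * (1-a^2)^((m:ℝ)/2) := by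
          rw [hc]; field_simp
        rw [heq]
        exact integral_lb m a ha0 ha1
    _ = ∫⁻ t in Set.Ioo a 1, ENNReal.ofReal (Real.sqrt (1 - t^2) ^ m) := by
        rw [intervalIntegral.integral_of_le ha1, integral_Ioc_eq_integral_Ioo]
        apply ofReal_integral_eq_lintegral_ofReal
        · exact ((hcont2.integrableOn_Icc).mono_set Set.Ioo_subset_Icc_self)
        · exact Filter.Eventually.of_forall (fun t => by positivity)

/-- spherical-cap probability lower bound
`P(⟨U,u⟩ > a) ≥ ((1-a)/(2d)) (1-a²)^{(d-1)/2}` for `0 ≤ a ≤ 1`. -/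
theorem sphere_cap_prob_lower (d : ℕ)
    (u : Metric.sphere (0 : EuclideanSpace ℝ (Fin d)) 1)
    (a : ℝ) (ha0 : 0 ≤ a) (ha1 : a ≤ 1) :
    ENNReal.ofReal ((1 - a) / (2 * d) * (1 - a ^ 2) ^ (((d : ℝ) - 1) / 2))
      ≤ uniformSphere d
          {x | a < (inner ℝ (x : EuclideanSpace ℝ (Fin d)) (u : EuclideanSpace ℝ (Fin d)) : ℝ)} := by
  have hu : ‖(u : EuclideanSpace ℝ (Fin d))‖ = 1 := by
    have := u.2
    rwa [mem_sphere_zero_iff_norm] at this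
  obtain ⟨m, rfl⟩ : ∃ m, d = m + 1 := by
    cases d with
    | zero =>
        exfalso
        rw [Subsingleton.elim (u : EuclideanSpace ℝ (Fin 0)) 0] at hu
        simp at hu
    | succ n => exact ⟨n, rfl⟩
  -- the cap in the sphere and the cap body in the ball
  set S : Set (Metric.sphere (0 : EuclideanSpace ℝ (Fin (m+1))) 1) :=
    {x | a < (inner ℝ (x : EuclideanSpace ℝ (Fin (m+1))) (u : EuclideanSpace ℝ (Fin (m+1))) : ℝ)} with hS
  have hSmeas : MeasurableSet S := by
    have hcont : Continuous fun x : Metric.sphere (0 : EuclideanSpace ℝ (Fin (m+1))) 1 => (inner ℝ (x : EuclideanSpace ℝ (Fin (m+1))) (u : EuclideanSpace ℝ (Fin (m+1))) : ℝ) :=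
      Continuous.inner continuous_subtype_val continuous_const
    exact measurableSet_lt measurable_const hcont.measurable
  set W : Set (EuclideanSpace ℝ (Fin (m+1))) := {y : EuclideanSpace ℝ (Fin (m+1)) | ‖y‖ < 1 ∧ a < (inner ℝ y (u : EuclideanSpace ℝ (Fin (m+1))) : ℝ)} with hW
  -- the cap body is contained in the scaled cap
  have hsub : W ⊆ Set.Ioo (0:ℝ) 1 • ((Subtype.val : Metric.sphere (0:EuclideanSpace ℝ (Fin (m+1))) 1 → EuclideanSpace ℝ (Fin (m+1))) '' S) := by
    rintro y ⟨hy1, hy2⟩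
    have hi0 : (0:ℝ) < inner ℝ y (u : EuclideanSpace ℝ (Fin (m+1))) := lt_of_le_of_lt ha0 hy2
    have hyne : y ≠ 0 := by
      intro h
      rw [h, inner_zero_left] at hi0
      exact lt_irrefl _ hi0
    have hny : 0 < ‖y‖ := norm_pos_iff.mpr hyne
    set x : EuclideanSpace ℝ (Fin (m+1)) := ‖y‖⁻¹ • y with hx
    have hxnorm : ‖x‖ = 1 := by
      rw [hx, norm_smul, norm_inv, norm_norm, inv_mul_cancel₀ hny.ne']
    have hxS : a < (inner ℝ x (u : EuclideanSpace ℝ (Fin (m+1))) : ℝ) := by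
      rw [hx, real_inner_smul_left]
      have hinv : 1 ≤ ‖y‖⁻¹ := by
        rw [le_inv_comm₀ one_pos hny]
        simpa using hy1.le
      nlinarith
    refine Set.mem_smul.mpr ⟨‖y‖, ⟨hny, hy1⟩, x, ?_, ?_⟩
    · exact ⟨⟨x, mem_sphere_zero_iff_norm.mpr hxnorm⟩, hxS, rfl⟩
    · rw [hx, smul_inv_smul₀ hny.ne']
  -- reduce to the coordinate cap via a reflection
  set e0 : EuclideanSpace ℝ (Fin (m+1)) := EuclideanSpace.single (0 : Fin (m+1)) (1:ℝ) with he0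
  have he0n : ‖e0‖ = 1 := by
    rw [he0, EuclideanSpace.norm_single]; norm_num
  set R : EuclideanSpace ℝ (Fin (m+1)) ≃ₗᵢ[ℝ] EuclideanSpace ℝ (Fin (m+1)) := Submodule.reflection (ℝ ∙ ((u : EuclideanSpace ℝ (Fin (m+1))) - e0))ᗮ with hR
  have hRu : R (u : EuclideanSpace ℝ (Fin (m+1))) = e0 := Submodule.reflection_sub (hu.trans he0n.symm)
  set W0 : Set (EuclideanSpace ℝ (Fin (m+1))) := {y : EuclideanSpace ℝ (Fin (m+1)) | ‖y‖ < 1 ∧ a < y 0} with hW0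
  have hW0meas : MeasurableSet W0 := by
    have : IsOpen W0 := by
      apply IsOpen.inter
      · exact isOpen_lt continuous_norm continuous_const
      · exact isOpen_lt continuous_const ((continuous_apply (0 : Fin (m+1))).comp (PiLp.continuous_ofLp 2 _))
    exact this.measurableSet
  have hpre : W = R ⁻¹' W0 := by
    ext y
    simp only [hW, hW0, Set.mem_preimage, Set.mem_setOf_eq]
    have h1 : ‖R y‖ = ‖y‖ := R.norm_map y
    have h2 : (R y) 0 = (inner ℝ y (u : EuclideanSpace ℝ (Fin (m+1))) : ℝ) := by
      have : (inner ℝ (R y) e0 : ℝ) = (inner ℝ y (u : EuclideanSpace ℝ (Fin (m+1))) : ℝ) := by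
        rw [← hRu, LinearIsometryEquiv.inner_map_map]
      rw [← this, he0]
      rw [EuclideanSpace.inner_single_right (𝕜 := ℝ) (0 : Fin (m+1)) (1:ℝ) (R y)]
      simp
    rw [h1, h2]
  have hWvol : volume W = volume W0 := by
    rw [hpre]
    exact R.measurePreserving.measure_preimage hW0meas.nullMeasurableSet
  -- volumes
  set Vd : ℝ≥0∞ := volume (ball (0 : EuclideanSpace ℝ (Fin (m+1))) 1) with hVd
  have hVd0 : Vd ≠ 0 := (measure_ball_pos volume 0 one_pos).ne'
  have hVdtop : Vd ≠ ⊤ := measure_ball_lt_top.ne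
  set c : ℝ := (1 - a) / (2 * ((m+1 : ℕ):ℝ)) * (1 - a ^ 2) ^ ((((m+1 : ℕ) : ℝ) - 1) / 2) with hc
  -- key volume bound
  have hkey : ENNReal.ofReal c * Vd ≤ volume W := by
    rw [hWvol]
    have := cap_lower m a ha0 ha1
    have hcast : ((1 - a) / (2 * ((m:ℝ)+1)) * (1 - a ^ 2) ^ ((m:ℝ)/2)) = c := by
      rw [hc]
      push_cast
      norm_num
    rw [hcast] at this
    exact this
  -- unfold the uniform measure
  rw [uniformSphere, Measure.smul_apply, smul_eq_mul]
  have hdim : Module.finrank ℝ (EuclideanSpace ℝ (Fin (m+1))) = m + 1 := finrank_euclideanSpace_fin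
  set k : ℝ≥0∞ := ((m + 1 : ℕ) : ℝ≥0∞) with hk
  have hk0 : k ≠ 0 := by simp [hk]
  have hktop : k ≠ ⊤ := ENNReal.natCast_ne_top (m+1)
  have hTuniv : (volume : Measure (EuclideanSpace ℝ (Fin (m+1)))).toSphere Set.univ = k * Vd := by
    rw [Measure.toSphere_apply_univ, hdim, hVd]
  have hTS : k * volume W ≤ (volume : Measure (EuclideanSpace ℝ (Fin (m+1)))).toSphere S := by
    rw [Measure.toSphere_apply' volume hSmeas, hdim]
    exact mul_le_mul_right (measure_mono hsub) _
  calc ENNReal.ofReal c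
      = ENNReal.ofReal c * (Vd⁻¹ * Vd) := by
        rw [ENNReal.inv_mul_cancel hVd0 hVdtop, mul_one]
    _ = (k * Vd)⁻¹ * (k * (ENNReal.ofReal c * Vd)) := by
        rw [ENNReal.mul_inv (Or.inl hk0) (Or.inl hktop)]
        symm
        calc k⁻¹ * Vd⁻¹ * (k * (ENNReal.ofReal c * Vd))
            = (k⁻¹ * k) * (ENNReal.ofReal c * (Vd⁻¹ * Vd)) := by ring
          _ = ENNReal.ofReal c * (Vd⁻¹ * Vd) := by
              rw [ENNReal.inv_mul_cancel hk0 hktop, one_mul]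
    _ ≤ (k * Vd)⁻¹ * (k * volume W) := by
        apply mul_le_mul_right
        exact mul_le_mul_right hkey _
    _ ≤ (k * Vd)⁻¹ * (volume : Measure (EuclideanSpace ℝ (Fin (m+1)))).toSphere S := mul_le_mul_right hTS _
    _ = ((volume : Measure (EuclideanSpace ℝ (Fin (m+1)))).toSphere Set.univ)⁻¹ * (volume : Measure (EuclideanSpace ℝ (Fin (m+1)))).toSphere S := by
        rw [hTuniv]
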